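/- arXiv:2604.09267 — 3 statements merged into one kernel-verified Lean document; each statement's English description precedes it below -/
import Mathlib

section
/- Let Q be symmetric positive definite and A, B_1,...,B_m real N×N matrices. Define J*_QCQP as the supremum of z^T Q A z over z in the unit sphere satisfying z^T Q B_i z = 0 for all i (and −∞ if this feasible set is empty). Then J*_QCQP < 0 if and only if for every nonzero z in R^N there exists u in R^m with z^T Q A z + sum_i (z^T Q B_i z) u_i < 0. -/
open Matrix

lemma quad_smul {N : ℕ} (M : Matrix (Fin N) (Fin N) ℝ) (c : ℝ) (z : Fin N → ℝ) :
    (c • z) ⬝ᵥ (M *ᵥ (c • z)) = c * c * (z ⬝ᵥ (M *ᵥ z)) := by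
  rw [smul_dotProduct, Matrix.mulVec_smul, dotProduct_smul, smul_eq_mul, smul_eq_mul]; ring

lemma quad_cont {N : ℕ} (M : Matrix (Fin N) (Fin N) ℝ) :
    Continuous fun z : Fin N → ℝ => z ⬝ᵥ (M *ᵥ z) := by
  simp only [dotProduct, mulVec, dotProduct]
  fun_prop

lemma dot_self_cont {N : ℕ} : Continuous fun z : Fin N → ℝ => z ⬝ᵥ z := by
  simp only [dotProduct]
  fun_prop

/-- negativity of the optimal value of the QCQP (with value -∞ if
infeasible) is equivalent to Q parameterizing a quadratic CLF. -/
theorem stmt_2 {N m : ℕ} (Q A : Matrix (Fin N) (Fin N) ℝ)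
    (B : Fin m → Matrix (Fin N) (Fin N) ℝ) (hQ : Q.PosDef)
    (Jqcqp : EReal)
    (hJ : Jqcqp = sSup ((fun z : Fin N → ℝ => ((z ⬝ᵥ ((Q * A) *ᵥ z) : ℝ) : EReal)) ''
      {z : Fin N → ℝ | z ⬝ᵥ z = 1 ∧ ∀ i, z ⬝ᵥ ((Q * B i) *ᵥ z) = 0})) :
    Jqcqp < 0 ↔
      ∀ z : Fin N → ℝ, z ≠ 0 → ∃ u : Fin m → ℝ,
        z ⬝ᵥ ((Q * A) *ᵥ z) + ∑ i, (z ⬝ᵥ ((Q * B i) *ᵥ z)) * u i < 0 := by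
  set S : Set (Fin N → ℝ) :=
    {z : Fin N → ℝ | z ⬝ᵥ z = 1 ∧ ∀ i, z ⬝ᵥ ((Q * B i) *ᵥ z) = 0} with hS
  set f : (Fin N → ℝ) → ℝ := fun z => z ⬝ᵥ ((Q * A) *ᵥ z) with hf
  constructor
  · intro hlt z hz
    by_cases hc : ∀ i, z ⬝ᵥ ((Q * B i) *ᵥ z) = 0
    · -- use u = 0; show f z < 0 by normalization
      refine ⟨0, ?_⟩
      have hzz : 0 < z ⬝ᵥ z := by
        have hne : ∃ j, z j ≠ 0 := by
          by_contra h
          push_neg at h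
          exact hz (funext h)
        obtain ⟨j, hj⟩ := hne
        exact Finset.sum_pos' (fun k _ => mul_self_nonneg _)
          ⟨j, Finset.mem_univ j, mul_self_pos.mpr hj⟩
      set r : ℝ := Real.sqrt (z ⬝ᵥ z) with hr
      have hrpos : 0 < r := Real.sqrt_pos.mpr hzz
      have hr2 : r * r = z ⬝ᵥ z := Real.mul_self_sqrt hzz.le
      set w : Fin N → ℝ := r⁻¹ • z with hw
      have hwS : w ∈ S := by
        constructor
        · have : w ⬝ᵥ w = r⁻¹ * r⁻¹ * (z ⬝ᵥ z) := by
            rw [hw, smul_dotProduct, dotProduct_smul, smul_eq_mul, smul_eq_mul]; ring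
          rw [this, ← hr2]
          field_simp
        · intro i
          rw [hw, quad_smul, hc i, mul_zero]
      have hmem : ((f w : ℝ) : EReal) ∈
          (fun z : Fin N → ℝ => ((z ⬝ᵥ ((Q * A) *ᵥ z) : ℝ) : EReal)) '' S :=
        ⟨w, hwS, rfl⟩
      have hle : ((f w : ℝ) : EReal) < 0 := lt_of_le_of_lt (hJ ▸ le_sSup hmem : _ ≤ Jqcqp) hlt
      have hfw : f w < 0 := by
        rwa [show ((0 : EReal)) = ((0 : ℝ) : EReal) from rfl, EReal.coe_lt_coe_iff] at hle
      have hfwz : f w = r⁻¹ * r⁻¹ * f z := by simp only [hf, hw]; exact quad_smul _ _ _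
      have hfz : f z < 0 := by
        have h2 : 0 < r⁻¹ * r⁻¹ := mul_pos (inv_pos.mpr hrpos) (inv_pos.mpr hrpos)
        nlinarith [hfw, hfwz]
      simpa using hfz
    · push_neg at hc
      obtain ⟨i, hi⟩ := hc
      set c := z ⬝ᵥ ((Q * B i) *ᵥ z)
      refine ⟨fun j => if j = i then (-(f z) - 1) / c else 0, ?_⟩
      have : ∑ j, (z ⬝ᵥ ((Q * B j) *ᵥ z)) * (if j = i then (-(f z) - 1) / c else 0)
          = c * ((-(f z) - 1) / c) := by
        rw [Finset.sum_eq_single i]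
        · simp; exact Or.inl rfl
        · intro b _ hb; simp [hb]
        · intro h; exact absurd (Finset.mem_univ i) h
      rw [this, mul_div_cancel₀ _ hi]
      simp only [hf]
      linarith
  · intro hclf
    rcases Set.eq_empty_or_nonempty S with hSe | hSne
    · rw [hJ, hSe]
      simp
    · have hclosed : IsClosed S := by
        have h1 : IsClosed {z : Fin N → ℝ | z ⬝ᵥ z = 1} :=
          isClosed_eq dot_self_cont continuous_const
        have h2 : IsClosed {z : Fin N → ℝ | ∀ i, z ⬝ᵥ ((Q * B i) *ᵥ z) = 0} := by
          have : {z : Fin N → ℝ | ∀ i, z ⬝ᵥ ((Q * B i) *ᵥ z) = 0}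
              = ⋂ i, {z : Fin N → ℝ | z ⬝ᵥ ((Q * B i) *ᵥ z) = 0} := by
            ext z; simp
          rw [this]
          exact isClosed_iInter fun i => isClosed_eq (quad_cont _) continuous_const
        exact h1.inter h2
      have hbdd : Bornology.IsBounded S := by
        apply (Metric.isBounded_iff_subset_closedBall 0).mpr
        refine ⟨1, fun z hz => ?_⟩
        rw [Metric.mem_closedBall, dist_zero_right]
        have h1 : z ⬝ᵥ z = 1 := hz.1
        refine (pi_norm_le_iff_of_nonneg zero_le_one).mpr fun i => ?_
        rw [Real.norm_eq_abs]
        have hsq : z i * z i ≤ 1 := by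
          rw [← h1]
          exact Finset.single_le_sum (fun k _ => mul_self_nonneg (z k)) (Finset.mem_univ i)
        exact abs_le_one_iff_mul_self_le_one.mpr hsq
      have hcompact : IsCompact S := Metric.isCompact_of_isClosed_isBounded hclosed hbdd
      obtain ⟨w, hwS, hwmax⟩ := hcompact.exists_isMaxOn hSne ((quad_cont (Q * A)).continuousOn)
      have hwlt : f w < 0 := by
        have hwne : w ≠ 0 := by
          intro h
          have := hwS.1
          rw [h] at this
          simp [dotProduct] at this
        obtain ⟨u, hu⟩ := hclf w hwne
        have : ∑ i, (w ⬝ᵥ ((Q * B i) *ᵥ w)) * u i = 0 := by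
          apply Finset.sum_eq_zero
          intro i _
          rw [hwS.2 i, zero_mul]
        rw [this, add_zero] at hu
        exact hu
      rw [hJ]
      calc sSup ((fun z : Fin N → ℝ => ((z ⬝ᵥ ((Q * A) *ᵥ z) : ℝ) : EReal)) '' S)
          ≤ ((f w : ℝ) : EReal) := by
            apply sSup_le
            rintro x ⟨v, hvS, rfl⟩
            exact EReal.coe_le_coe_iff.mpr (hwmax hvS)
        _ < 0 := by
            rw [show ((0 : EReal)) = ((0 : ℝ) : EReal) from rfl, EReal.coe_lt_coe_iff]
            exact hwlt
end

section
/- Let Q ≻ 0 and A, B_1,...,B_m be real N×N matrices. If the supremum J*_SDP of trace(sym(QA) Z) over PSD matrices Z with trace(Z) = 1 and trace(sym(QB_i) Z) = 0 for all i is negative (or the feasible set is empty), then for every nonzero z in R^N there exists u in R^m with z^T Q A z + sum_i (z^T Q B_i z) u_i < 0, i.e. V_Q(z) = z^T Q z is a control Lyapunov function for the bilinear system. -/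
open Matrix

private lemma trace_mul_vecMulVec {N : ℕ} (M : Matrix (Fin N) (Fin N) ℝ) (z : Fin N → ℝ) :
    Matrix.trace (M * vecMulVec z z) = z ⬝ᵥ (M *ᵥ z) := by
  rw [Matrix.trace_mul_comm]
  simp only [Matrix.trace, Matrix.diag, Matrix.mul_apply, vecMulVec_apply,
    dotProduct, Matrix.mulVec, Finset.mul_sum]
  rw [Finset.sum_comm]
  exact Finset.sum_congr rfl fun i _ => Finset.sum_congr rfl fun j _ => by ring

private lemma dot_transpose {N : ℕ} (M : Matrix (Fin N) (Fin N) ℝ) (z : Fin N → ℝ) :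
    z ⬝ᵥ (Mᵀ *ᵥ z) = z ⬝ᵥ (M *ᵥ z) := by
  rw [← Matrix.vecMul_transpose, Matrix.dotProduct_mulVec]
  simp [Matrix.vecMul_transpose, dotProduct_comm]

private lemma posSemidef_vecMulVec' {N : ℕ} (z : Fin N → ℝ) :
    (vecMulVec z z).PosSemidef := by
  have : vecMulVec z z = (Matrix.replicateRow Unit z)ᴴ * Matrix.replicateRow Unit z := by
    rw [Matrix.conjTranspose_replicateRow, star_trivial, ← Matrix.vecMulVec_eq]
  rw [this]
  exact Matrix.posSemidef_conjTranspose_mul_self _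

private lemma posSemidef_smul_real {N : ℕ} {M : Matrix (Fin N) (Fin N) ℝ}
    (h : M.PosSemidef) {c : ℝ} (hc : 0 ≤ c) : (c • M).PosSemidef := by
  constructor
  · show (c • M)ᴴ = c • M
    rw [Matrix.conjTranspose_smul, star_trivial, h.1.eq]
  · intro x
    exact (h.smul hc).2 x

/-- negativity of the SDP relaxation value (which is -∞ if the SDP
is infeasible) implies that V_Q is a control Lyapunov function. -/
theorem stmt_5 {N m : ℕ} (Q A : Matrix (Fin N) (Fin N) ℝ)
    (B : Fin m → Matrix (Fin N) (Fin N) ℝ) (hQ : Q.PosDef)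
    (Jsdp : EReal)
    (hs : Jsdp = sSup ((fun Z : Matrix (Fin N) (Fin N) ℝ =>
        ((Matrix.trace (((1 / 2 : ℝ) • (Q * A + (Q * A)ᵀ)) * Z) : ℝ) : EReal)) ''
      {Z : Matrix (Fin N) (Fin N) ℝ | Z.PosSemidef ∧ Matrix.trace Z = 1 ∧
        ∀ i, Matrix.trace (((1 / 2 : ℝ) • (Q * B i + (Q * B i)ᵀ)) * Z) = 0}))
    (hneg : Jsdp < 0) :
    ∀ z : Fin N → ℝ, z ≠ 0 → ∃ u : Fin m → ℝ,
      z ⬝ᵥ ((Q * A) *ᵥ z) + ∑ i, (z ⬝ᵥ ((Q * B i) *ᵥ z)) * u i < 0 := by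
  intro z hz
  set a := z ⬝ᵥ ((Q * A) *ᵥ z) with ha
  by_cases hb : ∀ i, z ⬝ᵥ ((Q * B i) *ᵥ z) = 0
  · -- all constraints vanish at z : use the normalized rank-one matrix
    have hzz : (0 : ℝ) < z ⬝ᵥ z := by
      obtain ⟨i, hi⟩ := Function.ne_iff.mp hz
      have : (0:ℝ) < z i * z i := mul_self_pos.mpr hi
      have h' : (0:ℝ) < ∑ j, z j * z j :=
        Finset.sum_pos' (fun j _ => mul_self_nonneg (z j)) ⟨i, Finset.mem_univ i, this⟩
      simpa [dotProduct] using h'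
    set c := (z ⬝ᵥ z)⁻¹ with hc
    have hcpos : 0 < c := inv_pos.mpr hzz
    set Z := c • vecMulVec z z with hZ
    have htr : ∀ M : Matrix (Fin N) (Fin N) ℝ,
        Matrix.trace (((1 / 2 : ℝ) • (M + Mᵀ)) * Z) = c * (z ⬝ᵥ (M *ᵥ z)) := by
      intro M
      rw [hZ, Matrix.mul_smul, Matrix.trace_smul, Matrix.smul_mul, Matrix.trace_smul,
        Matrix.add_mul, Matrix.trace_add, trace_mul_vecMulVec, trace_mul_vecMulVec,
        dot_transpose]
      simp only [smul_eq_mul]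
      ring
    have hmem : Z ∈ {Z : Matrix (Fin N) (Fin N) ℝ | Z.PosSemidef ∧ Matrix.trace Z = 1 ∧
        ∀ i, Matrix.trace (((1 / 2 : ℝ) • (Q * B i + (Q * B i)ᵀ)) * Z) = 0} := by
      refine ⟨posSemidef_smul_real (posSemidef_vecMulVec' z) (le_of_lt hcpos), ?_, ?_⟩
      · have : Matrix.trace (vecMulVec z z) = z ⬝ᵥ z := by
          simp [Matrix.trace, Matrix.diag, vecMulVec_apply, dotProduct]
        rw [hZ, Matrix.trace_smul, this, smul_eq_mul, hc, inv_mul_cancel₀ (ne_of_gt hzz)]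
      · intro i
        rw [htr (Q * B i), hb i, mul_zero]
    have hle : ((c * a : ℝ) : EReal) ≤ Jsdp := by
      rw [hs]
      refine le_sSup ⟨Z, hmem, ?_⟩
      show ((Matrix.trace (((1 / 2 : ℝ) • (Q * A + (Q * A)ᵀ)) * Z) : ℝ) : EReal) = _
      rw [htr (Q * A), ← ha]
    have hca : c * a < 0 := by
      have : ((c * a : ℝ) : EReal) < ((0 : ℝ) : EReal) := lt_of_le_of_lt hle (by simpa using hneg)
      exact_mod_cast this
    have haneg : a < 0 := by
      by_contra h
      push_neg at h
      exact absurd (mul_nonneg (le_of_lt hcpos) h) (not_le.mpr hca)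
    exact ⟨0, by simpa using haneg⟩
  · push_neg at hb
    obtain ⟨i₀, hi₀⟩ := hb
    set b := z ⬝ᵥ ((Q * B i₀) *ᵥ z) with hbdef
    refine ⟨Pi.single i₀ (-(a + 1) / b), ?_⟩
    have hsum : ∑ i, (z ⬝ᵥ ((Q * B i) *ᵥ z)) * (Pi.single i₀ (-(a + 1) / b) : Fin m → ℝ) i = -(a + 1) := by
      rw [Finset.sum_eq_single i₀]
      · rw [Pi.single_eq_same, ← hbdef, mul_div_cancel₀ _ hi₀]
      · intro j _ hj
        rw [Pi.single_eq_of_ne hj, mul_zero]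
      · intro h; exact absurd (Finset.mem_univ i₀) h
    rw [hsum]
    linarith
end

section
/- Suppose the optimal value J*_SDP of the SDP relaxation is attained at a rank-1 matrix Z* (SDP-exactness). Then Q ≻ 0 parameterizes a control Lyapunov function V_Q for the bilinear system if and only if J*_SDP < 0 (with J*_SDP = −∞ if the SDP is infeasible). -/
open Matrix

private lemma sym_quad {N : ℕ} (M : Matrix (Fin N) (Fin N) ℝ) (z : Fin N → ℝ) :
    z ⬝ᵥ (((1/2:ℝ) • (M + Mᵀ)) *ᵥ z) = z ⬝ᵥ (M *ᵥ z) := by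
  have ht : z ⬝ᵥ (Mᵀ *ᵥ z) = z ⬝ᵥ (M *ᵥ z) := by
    rw [mulVec_transpose, dotProduct_comm, ← dotProduct_mulVec]
  rw [smul_mulVec, dotProduct_smul, add_mulVec, dotProduct_add, ht, smul_eq_mul]
  ring

private lemma trace_vmv {N : ℕ} (S : Matrix (Fin N) (Fin N) ℝ) (w : Fin N → ℝ) :
    Matrix.trace (S * vecMulVec w w) = w ⬝ᵥ (S *ᵥ w) := by
  simp [Matrix.trace, mul_apply, vecMulVec_apply, dotProduct, mulVec, diag, Finset.mul_sum]
  congr 1; ext i; congr 1; ext j; ring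

private lemma trace_vmv' {N : ℕ} (w : Fin N → ℝ) :
    Matrix.trace (vecMulVec w w) = w ⬝ᵥ w := by
  simp [Matrix.trace, diag, vecMulVec_apply, dotProduct]

private lemma quad_vmv {N : ℕ} (z x : Fin N → ℝ) :
    x ⬝ᵥ (vecMulVec z z *ᵥ x) = (z ⬝ᵥ x) * (z ⬝ᵥ x) := by
  simp [dotProduct, mulVec, vecMulVec_apply, Finset.mul_sum, Finset.sum_mul]
  congr 1; ext i; congr 1; ext j; ring

private lemma smul_vmv_psd {N : ℕ} (z : Fin N → ℝ) (s : ℝ) (hs : 0 ≤ s) :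
    (s • vecMulVec z z).PosSemidef := by
  rw [posSemidef_iff_dotProduct_mulVec]
  constructor
  · ext i j
    simp [conjTranspose_apply, vecMulVec_apply, mul_comm]
  · intro x
    have hstar : star x = x := by simp
    rw [hstar, smul_mulVec, dotProduct_smul, quad_vmv]
    have := mul_self_nonneg (z ⬝ᵥ x)
    positivity

private theorem psd_rank_one {N : ℕ} (M : Matrix (Fin N) (Fin N) ℝ) (hM : M.PosSemidef)
    (ht : M.trace = 1) (hr : M.rank = 1) : ∃ w : Fin N → ℝ, M = vecMulVec w w := by
  have hr' : Module.finrank ℝ (LinearMap.range M.mulVecLin) = 1 := hr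
  obtain ⟨⟨v, hvmem⟩, hv0, hgen⟩ := finrank_eq_one_iff'.mp hr'
  have hv0' : v ≠ 0 := fun h => hv0 (Subtype.ext (by simpa using h))
  have hcol : ∀ j, ∃ c : ℝ, ∀ i, M i j = c * v i := by
    intro j
    have hmem : (M *ᵥ Pi.single j 1) ∈ LinearMap.range M.mulVecLin :=
      ⟨Pi.single j 1, rfl⟩
    obtain ⟨c, hcc⟩ := hgen ⟨_, hmem⟩
    have hc' : c • v = M *ᵥ Pi.single j 1 := congrArg Subtype.val hcc
    refine ⟨c, fun i => ?_⟩
    have := congrFun hc' i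
    simpa [mulVec_single] using this.symm
  choose c hc using hcol
  have hsymM : ∀ i j, M j i = M i j := by
    intro i j
    have := congrFun (congrFun hM.isHermitian i) j
    simpa [conjTranspose_apply] using this
  have hsym : ∀ i j, c j * v i = c i * v j := by
    intro i j
    rw [← hc j i, ← hc i j]
    exact (hsymM i j).symm
  obtain ⟨k, hk⟩ : ∃ k, v k ≠ 0 := Function.ne_iff.mp hv0'
  set lam : ℝ := c k / v k with hlam
  have hMij : ∀ i j, M i j = lam * v i * v j := by
    intro i j
    have h1 := hsym j k
    have hcj : c j = lam * v j := by
      rw [hlam, div_mul_eq_mul_div, eq_div_iff hk]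
      linarith [h1]
    rw [hc j i, hcj]; ring
  have htr : lam * ∑ i, v i * v i = 1 := by
    rw [← ht]
    simp [Matrix.trace, diag, hMij, Finset.mul_sum]
    congr 1; ext i; ring
  have hsum : 0 < ∑ i, v i * v i := by
    rcases Function.ne_iff.mp hv0' with ⟨k', hk'⟩
    apply Finset.sum_pos' (fun i _ => mul_self_nonneg _)
    exact ⟨k', Finset.mem_univ _, mul_self_pos.mpr hk'⟩
  have hlampos : 0 < lam := by
    by_contra h
    push_neg at h
    nlinarith
  refine ⟨fun i => Real.sqrt lam * v i, ?_⟩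
  ext i j
  rw [hMij i j, vecMulVec_apply]
  rw [show (Real.sqrt lam * v i) * (Real.sqrt lam * v j)
      = (Real.sqrt lam * Real.sqrt lam) * (v i * v j) from by ring,
    Real.mul_self_sqrt hlampos.le]
  ring

/-- under SDP-exactness (the SDP value is attained at a rank-1
feasible matrix Z*), Q ≻ 0 parameterizes a CLF if and only if J*_SDP < 0. -/
theorem stmt_17 {N m : ℕ} (Q A : Matrix (Fin N) (Fin N) ℝ)
    (B : Fin m → Matrix (Fin N) (Fin N) ℝ) (hQ : Q.PosDef)
    (Jsdp : EReal)
    (hs : Jsdp = sSup ((fun Z : Matrix (Fin N) (Fin N) ℝ =>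
        ((Matrix.trace (((1 / 2 : ℝ) • (Q * A + (Q * A)ᵀ)) * Z) : ℝ) : EReal)) ''
      {Z : Matrix (Fin N) (Fin N) ℝ | Z.PosSemidef ∧ Matrix.trace Z = 1 ∧
        ∀ i, Matrix.trace (((1 / 2 : ℝ) • (Q * B i + (Q * B i)ᵀ)) * Z) = 0}))
    (hexact : ∃ Zstar : Matrix (Fin N) (Fin N) ℝ, Zstar.PosSemidef ∧
      Matrix.trace Zstar = 1 ∧
      (∀ i, Matrix.trace (((1 / 2 : ℝ) • (Q * B i + (Q * B i)ᵀ)) * Zstar) = 0) ∧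
      Zstar.rank = 1 ∧
      Jsdp = ((Matrix.trace (((1 / 2 : ℝ) • (Q * A + (Q * A)ᵀ)) * Zstar) : ℝ) : EReal)) :
    (∀ z : Fin N → ℝ, z ≠ 0 → ∃ u : Fin m → ℝ,
        z ⬝ᵥ ((Q * A) *ᵥ z) + ∑ i, (z ⬝ᵥ ((Q * B i) *ᵥ z)) * u i < 0) ↔
      Jsdp < 0 := by
  obtain ⟨Zs, hZpsd, hZtr, hZB, hZrank, hJ⟩ := hexact
  obtain ⟨w, hw⟩ := psd_rank_one Zs hZpsd hZtr hZrank
  have hwB : ∀ i, w ⬝ᵥ ((Q * B i) *ᵥ w) = 0 := by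
    intro i
    have h := hZB i
    rw [hw, trace_vmv, sym_quad] at h
    exact h
  have hwtr : w ⬝ᵥ w = 1 := by rw [hw, trace_vmv'] at hZtr; exact hZtr
  have hw0 : w ≠ 0 := by
    intro h
    rw [h] at hwtr
    simp [dotProduct] at hwtr
  have hJA : Jsdp = ((w ⬝ᵥ ((Q * A) *ᵥ w) : ℝ) : EReal) := by
    rw [hJ, hw, trace_vmv, sym_quad]
  constructor
  · intro hclf
    obtain ⟨u, hu⟩ := hclf w hw0
    have hsum0 : ∑ i, (w ⬝ᵥ ((Q * B i) *ᵥ w)) * u i = 0 := by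
      simp [hwB]
    rw [hsum0, add_zero] at hu
    rw [hJA]
    exact_mod_cast EReal.coe_neg'.mpr hu
  · intro hJneg z hz
    by_cases hB : ∀ i, z ⬝ᵥ ((Q * B i) *ᵥ z) = 0
    · -- Z := (z⬝z)⁻¹ • z zᵀ is feasible
      have hs0 : 0 < z ⬝ᵥ z := by
        rcases Function.ne_iff.mp hz with ⟨k', hk'⟩
        apply Finset.sum_pos' (fun i _ => mul_self_nonneg _)
        exact ⟨k', Finset.mem_univ _, mul_self_pos.mpr hk'⟩
      set s : ℝ := (z ⬝ᵥ z)⁻¹ with hsdef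
      have hs0' : 0 < s := inv_pos.mpr hs0
      set Z : Matrix (Fin N) (Fin N) ℝ := s • vecMulVec z z with hZdef
      have hpsd : Z.PosSemidef := smul_vmv_psd z s hs0'.le
      have htr1 : Matrix.trace Z = 1 := by
        rw [hZdef, trace_smul, trace_vmv', smul_eq_mul, hsdef]
        exact inv_mul_cancel₀ hs0.ne'
      have hBc : ∀ i, Matrix.trace (((1 / 2 : ℝ) • (Q * B i + (Q * B i)ᵀ)) * Z) = 0 := by
        intro i
        rw [hZdef, mul_smul_comm, trace_smul, trace_vmv, sym_quad, hB i, smul_eq_mul, mul_zero]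
      have hmem : ((Matrix.trace (((1 / 2 : ℝ) • (Q * A + (Q * A)ᵀ)) * Z) : ℝ) : EReal) ≤ Jsdp := by
        rw [hs]
        exact le_sSup ⟨Z, ⟨hpsd, htr1, hBc⟩, rfl⟩
      have hval : Matrix.trace (((1 / 2 : ℝ) • (Q * A + (Q * A)ᵀ)) * Z)
          = s * (z ⬝ᵥ ((Q * A) *ᵥ z)) := by
        rw [hZdef, mul_smul_comm, trace_smul, trace_vmv, sym_quad, smul_eq_mul]
      have hlt : s * (z ⬝ᵥ ((Q * A) *ᵥ z)) < 0 := by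
        have := hmem.trans_lt hJneg
        rw [hval] at this
        exact EReal.coe_neg'.mp this
      have hA0 : z ⬝ᵥ ((Q * A) *ᵥ z) < 0 := by
        nlinarith
      exact ⟨0, by simpa using hA0⟩
    · push_neg at hB
      obtain ⟨i0, hi0⟩ := hB
      set u : Fin m → ℝ := fun j => if j = i0 then
        (-(z ⬝ᵥ ((Q * A) *ᵥ z)) - 1) / (z ⬝ᵥ ((Q * B i0) *ᵥ z)) else 0 with hudef
      refine ⟨u, ?_⟩
      rw [Finset.sum_eq_single i0]
      · have hui0 : u i0 = (-(z ⬝ᵥ ((Q * A) *ᵥ z)) - 1) / (z ⬝ᵥ ((Q * B i0) *ᵥ z)) := by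
          rw [hudef]; simp
        rw [hui0, mul_div_assoc', mul_comm, mul_div_assoc, div_self hi0, mul_one]
        linarith
      · intro b _ hb
        simp [hudef, hb]
      · intro h
        exact absurd (Finset.mem_univ i0) h
end
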